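/- Let φ : [0,∞) → ℝ be continuously differentiable and suppose there exists φ₀ > 0 such that φ(s) + 2s·φ'(s) ≥ φ₀ for all s ≥ 0. Then for every m with −φ₀ < m < 0, the map t ↦ Φ(t²/2) + (m/2)·t² is strictly convex on ℝ, where Φ(s) = ∫₀^s φ(τ) dτ. -/

import Mathlib

open Set intervalIntegral

/-- If `φ` is `C¹` on `[0,∞)` and `φ(s) + 2s·φ'(s) ≥ φ₀ > 0` for all `s ≥ 0`,
then for every `m ∈ (−φ₀, 0)` the map `t ↦ Φ(t²/2) + (m/2)t²` is strictly convex
on `ℝ`, where `Φ(s) = ∫₀^s φ`. -/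
theorem strictConvex_shifted_of_phi3
    (φ φ' : ℝ → ℝ) (φ₀ : ℝ) (hφ₀ : 0 < φ₀)
    (hderiv : ∀ s ∈ Set.Ici (0:ℝ), HasDerivWithinAt φ (φ' s) (Set.Ici 0) s)
    (hderivcont : ContinuousOn φ' (Set.Ici 0))
    (h : ∀ s ∈ Set.Ici (0:ℝ), φ₀ ≤ φ s + 2 * s * φ' s)
    (Φ : ℝ → ℝ) (hΦ : ∀ s : ℝ, Φ s = ∫ τ in (0:ℝ)..s, φ τ) :
    ∀ m : ℝ, -φ₀ < m → m < 0 →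
      StrictConvexOn ℝ Set.univ (fun t : ℝ => Φ (t ^ 2 / 2) + m / 2 * t ^ 2) := by
  intro m hm1 hm2
  have hφcont : ContinuousOn φ (Set.Ici 0) :=
    fun s hs => (hderiv s hs).continuousWithinAt
  have hΦeq : Φ = fun s => ∫ τ in (0:ℝ)..s, φ τ := funext hΦ
  subst hΦeq
  -- derivative of t ↦ t^2/2
  have hsq : ∀ t : ℝ, HasDerivAt (fun t : ℝ => t ^ 2 / 2) t t := by
    intro t
    have := (hasDerivAt_pow 2 t).div_const 2
    simpa using this
  have hmaps : ∀ x : ℝ, x ^ 2 / 2 ∈ Set.Ici (0:ℝ) := fun x => Set.mem_Ici.mpr (by positivity)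
  have hint : ∀ b : ℝ, 0 ≤ b → IntervalIntegrable φ MeasureTheory.volume 0 b := by
    intro b hb
    apply ContinuousOn.intervalIntegrable
    apply hφcont.mono
    rw [Set.uIcc_of_le hb]
    exact fun x hx => hx.1
  -- derivative of t ↦ Φ(t²/2)
  have hΦd : ∀ t : ℝ, HasDerivAt (fun t : ℝ => ∫ τ in (0:ℝ)..(t ^ 2 / 2), φ τ)
      (φ (t ^ 2 / 2) * t) t := by
    intro t
    rcases eq_or_ne t 0 with rfl | ht
    · have hmeas : StronglyMeasurableAtFilter φ (nhdsWithin (0:ℝ) (Set.Ioi 0)) :=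
        ⟨Set.Ici 0, Filter.mem_of_superset self_mem_nhdsWithin Set.Ioi_subset_Ici_self,
          hφcont.aestronglyMeasurable measurableSet_Ici⟩
      have hcw : ContinuousWithinAt φ (Set.Ioi 0) 0 :=
        (hφcont 0 Set.self_mem_Ici).mono Set.Ioi_subset_Ici_self
      have h0 : HasDerivWithinAt (fun u => ∫ τ in (0:ℝ)..u, φ τ) (φ 0) (Set.Ici 0) 0 :=
        intervalIntegral.integral_hasDerivWithinAt_right (hint 0 le_rfl) hmeas hcw
      have := h0.scomp_hasDerivAt_of_eq 0 (hsq 0) (fun x => hmaps x) (by norm_num)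
      norm_num at this ⊢
      exact this
    · have hs : 0 < t ^ 2 / 2 := by positivity
      have hmem : Set.Ici (0:ℝ) ∈ nhds (t ^ 2 / 2) := Ici_mem_nhds hs
      have hca : ContinuousAt φ (t ^ 2 / 2) := hφcont.continuousAt hmem
      have hmeas : StronglyMeasurableAtFilter φ (nhds (t ^ 2 / 2)) :=
        ⟨Set.Ici 0, hmem, hφcont.aestronglyMeasurable measurableSet_Ici⟩
      have hd : HasDerivAt (fun u => ∫ τ in (0:ℝ)..u, φ τ) (φ (t ^ 2 / 2)) (t ^ 2 / 2) :=
        intervalIntegral.integral_hasDerivAt_right (hint _ hs.le) hmeas hca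
      exact hd.comp t (hsq t)
  -- derivative of t ↦ φ(t²/2)
  have hφd : ∀ t : ℝ, HasDerivAt (fun t : ℝ => φ (t ^ 2 / 2)) (φ' (t ^ 2 / 2) * t) t := by
    intro t
    rcases eq_or_ne t 0 with rfl | ht
    · have := (hderiv 0 Set.self_mem_Ici).scomp_hasDerivAt_of_eq 0 (hsq 0) (fun x => hmaps x) (by norm_num)
      norm_num at this ⊢
      exact this
    · have hs : 0 < t ^ 2 / 2 := by positivity
      have hd : HasDerivAt φ (φ' (t ^ 2 / 2)) (t ^ 2 / 2) :=
        (hderiv _ hs.le).hasDerivAt (Ici_mem_nhds hs)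
      exact hd.comp t (hsq t)
  -- the candidate derivative function
  set g : ℝ → ℝ := fun t => φ (t ^ 2 / 2) * t + m * t with hg
  have hgd : ∀ t : ℝ,
      HasDerivAt g (φ (t ^ 2 / 2) + 2 * (t ^ 2 / 2) * φ' (t ^ 2 / 2) + m) t := by
    intro t
    have h1 := ((hφd t).mul (hasDerivAt_id t)).add ((hasDerivAt_id t).const_mul m)
    refine h1.congr_deriv ?_
    simp [id]
    ring
  have hgpos : ∀ t : ℝ, 0 < φ (t ^ 2 / 2) + 2 * (t ^ 2 / 2) * φ' (t ^ 2 / 2) + m := by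
    intro t
    have := h (t ^ 2 / 2) (hmaps t)
    linarith
  have hgmono : StrictMono g := by
    apply strictMono_of_deriv_pos
    intro t
    rw [(hgd t).deriv]
    exact hgpos t
  -- derivative of the full function
  have hfd : ∀ t : ℝ,
      HasDerivAt (fun t : ℝ => (∫ τ in (0:ℝ)..(t ^ 2 / 2), φ τ) + m / 2 * t ^ 2) (g t) t := by
    intro t
    have h1 := (hΦd t).add ((hasDerivAt_pow 2 t).const_mul (m / 2))
    refine h1.congr_deriv ?_
    simp [hg]
    ring
  have hcont : Continuous (fun t : ℝ => (∫ τ in (0:ℝ)..(t ^ 2 / 2), φ τ) + m / 2 * t ^ 2) := by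
    have : Differentiable ℝ (fun t : ℝ => (∫ τ in (0:ℝ)..(t ^ 2 / 2), φ τ) + m / 2 * t ^ 2) :=
      fun t => (hfd t).differentiableAt
    exact this.continuous
  have hderivf : deriv (fun t : ℝ => (∫ τ in (0:ℝ)..(t ^ 2 / 2), φ τ) + m / 2 * t ^ 2) = g :=
    funext fun t => (hfd t).deriv
  have := StrictMono.strictConvexOn_univ_of_deriv hcont (hderivf ▸ hgmono)
  exact this
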